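/- arXiv:1310.4755 — 3 statements merged into one kernel-verified Lean document; each statement's English description precedes it below -/
import Mathlib

section
/- Let μ = C + l_1 + l_2 be a curved symmetric DGLA structure on a ℤ-graded vector space E (a curved L∞-structure whose only components are a 0-form C ∈ E_1, a symmetric vector valued 1-form l_1 of degree +1, and a symmetric vector valued 2-form l_2 of degree +1), and let π ∈ E_0, viewed as a symmetric vector valued 0-form. Then π + S is a Nijenhuis vector valued form (with curvature) with respect to μ, with square 2π + S, if and only if π is a Poisson element, i.e. l_2(π,π) = 0. -/
open scoped DirectSum
open Classical

noncomputable section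

namespace RN

section Core

variable (𝕜 : Type) [Field 𝕜] [CharZero 𝕜]
variable (E : ℤ → Type) [∀ i, AddCommGroup (E i)] [∀ i, Module 𝕜 (E i)]

/-- Raw vector-valued forms on the graded vector space `E`: for every arity `n` and every
vector of (input) degrees `ι`, a function on homogeneous tuples with values in the total
graded space `⨁ i, E i`. -/
abbrev RawForm : Type :=
  ∀ n : ℕ, ∀ ι : Fin n → ℤ, (∀ j, E (ι j)) → ⨁ i, E i

/-- Multilinearity (in each slot, on homogeneous arguments). -/
def IsMultilin (F : RawForm E) : Prop :=
  ∀ (n : ℕ) (ι : Fin n → ℤ) (x : ∀ j, E (ι j)) (j : Fin n) (a b : E (ι j)) (c : 𝕜),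
    F n ι (Function.update x j (a + b)) =
        F n ι (Function.update x j a) + F n ι (Function.update x j b) ∧
      F n ι (Function.update x j (c • a)) = c • F n ι (Function.update x j a)

/-- Graded symmetry: swapping two adjacent homogeneous arguments multiplies the value
by the Koszul sign `(-1)^{|X||Y|}`. -/
def IsGradedSym (F : RawForm E) : Prop :=
  ∀ (n : ℕ) (ι : Fin n → ℤ) (x : ∀ j, E (ι j)) (p q : Fin n), (p : ℕ) + 1 = (q : ℕ) →
    F n (fun j => ι (Equiv.swap p q j)) (fun j => x (Equiv.swap p q j)) =
      ((-1 : 𝕜) ^ (ι p * ι q)) • F n ι x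

/-- `F` has degree `d`: its value on homogeneous arguments of degrees `ι` is homogeneous
of degree `(∑ j, ι j) + d`. -/
def IsOfDeg (d : ℤ) (F : RawForm E) : Prop :=
  ∀ (n : ℕ) (ι : Fin n → ℤ) (x : ∀ j, E (ι j)) (m : ℤ),
    m ≠ (∑ j, ι j) + d → F n ι x m = 0

/-- Symmetric vector valued form of degree `d`. -/
def IsSVF (d : ℤ) (F : RawForm E) : Prop :=
  IsMultilin 𝕜 E F ∧ IsGradedSym 𝕜 E F ∧ IsOfDeg E d F

/-- `F` is (concentrated in) a `k`-form. -/
def IsArity (k : ℕ) (F : RawForm E) : Prop :=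
  ∀ n, n ≠ k → ∀ (ι : Fin n → ℤ) (x : ∀ j, E (ι j)), F n ι x = 0

/-- `F` has no 0-form (curvature) component. -/
def NoCurv (F : RawForm E) : Prop :=
  ∀ (ι : Fin 0 → ℤ) (x : ∀ j, E (ι j)), F 0 ι x = 0

/-- `(k, n-k)`-shuffles of `Fin n`. -/
def IsShuffle (k : ℕ) {n : ℕ} (σ : Equiv.Perm (Fin n)) : Prop :=
  ∀ i j : Fin n, i < j → ((j : ℕ) < k ∨ k ≤ (i : ℕ)) → σ i < σ j

/-- The Koszul sign of the rearrangement `(X_{σ(1)},…,X_{σ(n)})` of homogeneous elements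
of degrees `ι`. -/
def koszulSign {n : ℕ} (ι : Fin n → ℤ) (σ : Equiv.Perm (Fin n)) : 𝕜 :=
  ∏ p ∈ Finset.univ.filter (fun p : Fin n × Fin n => p.1 < p.2 ∧ σ p.2 < σ p.1),
    (-1 : 𝕜) ^ (ι (σ p.1) * ι (σ p.2))

/-- Prepend a degree to a vector of degrees. -/
def dcons {n : ℕ} (m : ℤ) (rest : Fin n → ℤ) : Fin (n + 1) → ℤ :=
  fun j => if h : (j : ℕ) = 0 then m else rest ⟨(j : ℕ) - 1, by have := j.isLt; omega⟩

/-- Prepend a homogeneous element to a tuple of homogeneous elements. -/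
def dconsV {n : ℕ} {m : ℤ} {rest : Fin n → ℤ} (v : E m) (xs : ∀ i, E (rest i)) :
    ∀ j : Fin (n + 1), E (dcons m rest j) := fun j => by
  unfold dcons
  by_cases h : (j : ℕ) = 0
  · rw [dif_pos h]; exact v
  · rw [dif_neg h]; exact xs ⟨(j : ℕ) - 1, by have := j.isLt; omega⟩

/-- The insertion operator `ι_F G`, summing over shuffles with Koszul signs. -/
def ins (F G : RawForm E) : RawForm E :=
  fun n ι x =>
    ∑ k : Fin (n + 1),
      ∑ σ ∈ Finset.univ.filter (fun σ : Equiv.Perm (Fin n) => IsShuffle (k : ℕ) σ),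
        koszulSign 𝕜 ι σ •
          DFinsupp.sum
            (F (k : ℕ)
              (fun i => ι (σ ⟨(i : ℕ), by have h1 := i.isLt; have h2 := k.isLt; omega⟩))
              (fun i => x (σ ⟨(i : ℕ), by have h1 := i.isLt; have h2 := k.isLt; omega⟩)))
            (fun m v =>
              G (n - (k : ℕ) + 1)
                (dcons m
                  (fun i => ι (σ ⟨(k : ℕ) + (i : ℕ), by have h1 := i.isLt; have h2 := k.isLt; omega⟩)))
                (dconsV E v
                  (fun i => x (σ ⟨(k : ℕ) + (i : ℕ), by have h1 := i.isLt; have h2 := k.isLt; omega⟩))))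

/-- The Richardson–Nijenhuis bracket `[F,G]_RN = ι_F G - (-1)^{dK·dL} ι_G F` of forms
of degrees `dK` and `dL`. -/
def rnb (dK dL : ℤ) (F G : RawForm E) : RawForm E :=
  fun n ι x => ins 𝕜 E F G n ι x - ((-1 : 𝕜) ^ (dK * dL)) • ins 𝕜 E G F n ι x

/-- An element of the graded vector space, regarded as a vector valued 0-form. -/
def ofElem (v : ⨁ i, E i) : RawForm E := fun n _ _ => if n = 0 then v else 0

/-- The Euler map `S(X) = -|X|·X`, a vector valued 1-form of degree 0. -/
def euler : RawForm E :=
  fun n ι x =>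
    if h : n = 1 then
      (-(ι ⟨0, by omega⟩)) • DirectSum.of E (ι ⟨0, by omega⟩) (x ⟨0, by omega⟩)
    else 0

/-- The identity map of `E`, regarded as a vector valued 1-form of degree 0. -/
def idF : RawForm E :=
  fun n ι x =>
    if h : n = 1 then DirectSum.of E (ι ⟨0, by omega⟩) (x ⟨0, by omega⟩) else 0

/-- The arity-`k` component of a vector valued form. -/
def comp (F : RawForm E) (k : ℕ) : RawForm E :=
  fun n ι x => if n = k then F n ι x else 0

end Core

set_option linter.unusedSectionVars false
section Helpers
variable {𝕜 : Type} [Field 𝕜] [CharZero 𝕜]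
variable {E : ℤ → Type} [∀ i, AddCommGroup (E i)] [∀ i, Module 𝕜 (E i)]

lemma rawCongr (G : RawForm E) {n : ℕ} {ι ι' : Fin n → ℤ} (h : ∀ j, ι j = ι' j)
    {x : ∀ j, E (ι j)} {x' : ∀ j, E (ι' j)} (hx : ∀ j, HEq (x j) (x' j)) :
    G n ι x = G n ι' x' := by
  obtain rfl : ι = ι' := funext h
  obtain rfl : x = x' := funext fun j => eq_of_heq (hx j)
  rfl

lemma rawCongr_cons (G : RawForm E) {n : ℕ} (m : ℤ) {rest rest' : Fin n → ℤ}
    (h : ∀ i, rest i = rest' i) (v : E m) {restV : ∀ i, E (rest i)} {restV' : ∀ i, E (rest' i)}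
    (hx : ∀ i, HEq (restV i) (restV' i)) :
    G (n+1) (dcons m rest) (dconsV E v restV) = G (n+1) (dcons m rest') (dconsV E v restV') := by
  obtain rfl : rest = rest' := funext h
  obtain rfl : restV = restV' := funext fun i => eq_of_heq (hx i)
  rfl

lemma heq_arg {n : ℕ} {ι : Fin n → ℤ} (x : ∀ j, E (ι j)) {a b : Fin n} (h : a = b) :
    HEq (x a) (x b) := by subst h; rfl

lemma perm_eq_one {n : ℕ} (σ : Equiv.Perm (Fin n)) (h : StrictMono σ) : σ = 1 := by
  apply Equiv.ext; intro x
  have h2 := Fin.coe_orderIso_apply (StrictMono.orderIsoOfSurjective σ h σ.surjective) x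
  rw [congrFun (StrictMono.coe_orderIsoOfSurjective (⇑σ) h σ.surjective) x] at h2
  exact Fin.ext h2

lemma shuffle_filter_eq {n : ℕ} (k : ℕ) (hk : k = 0 ∨ n ≤ k) :
    Finset.univ.filter (fun σ : Equiv.Perm (Fin n) => IsShuffle k σ) = {1} := by
  ext σ
  simp only [Finset.mem_filter, Finset.mem_univ, true_and, Finset.mem_singleton]
  constructor
  · intro hσ
    apply perm_eq_one
    intro i j hij
    apply hσ i j hij
    rcases hk with rfl | hk
    · exact Or.inr (Nat.zero_le _)
    · exact Or.inl (lt_of_lt_of_le j.isLt hk)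
  · rintro rfl
    intro i j hij _
    simpa using hij

lemma shuffle1_filter_two :
    Finset.univ.filter (fun σ : Equiv.Perm (Fin 2) => IsShuffle 1 σ) = Finset.univ := by
  ext σ
  simp only [Finset.mem_filter, Finset.mem_univ, true_and, iff_true]
  intro i j hij hc
  have h1 := i.isLt
  have h2 := j.isLt
  have h3 : (i:ℕ) < (j:ℕ) := hij
  rcases hc with hc | hc <;> omega

lemma koszulSign_one {n : ℕ} (ι : Fin n → ℤ) :
    koszulSign 𝕜 ι (1 : Equiv.Perm (Fin n)) = 1 := by
  unfold koszulSign
  rw [Finset.filter_false_of_mem, Finset.prod_empty]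
  rintro p - ⟨h1, h2⟩
  simp only [Equiv.Perm.coe_one, id_eq] at h2
  exact absurd h1 (not_lt.mpr h2.le)

lemma koszulSign_swap2 (ι : Fin 2 → ℤ) :
    koszulSign 𝕜 ι (Equiv.swap 0 1) = (-1 : 𝕜) ^ (ι 1 * ι 0) := by
  unfold koszulSign
  have : Finset.univ.filter
      (fun p : Fin 2 × Fin 2 => p.1 < p.2 ∧ Equiv.swap 0 1 p.2 < Equiv.swap 0 1 p.1)
      = {((0 : Fin 2), (1 : Fin 2))} := by decide
  rw [this, Finset.prod_singleton]
  rfl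

lemma perm_two_univ :
    (Finset.univ : Finset (Equiv.Perm (Fin 2))) = {1, Equiv.swap 0 1} := by decide

lemma sum_of_index {i : ℤ} (v : E i) (f : ∀ m : ℤ, E m → ⨁ j, E j) (h : f i 0 = 0) :
    DFinsupp.sum (DirectSum.of E i v) f = f i v :=
  DFinsupp.sum_single_index h

lemma sum_neg_smul_of (w : ⨁ i, E i) (D : ℤ) (hw : ∀ m, m ≠ D → w m = 0) :
    (DFinsupp.sum w fun m u => (-m : ℤ) • DirectSum.of E m u) = (-D : ℤ) • w := by
  rw [DFinsupp.sum]
  have h1 : ∀ m ∈ DFinsupp.support w,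
      (-m : ℤ) • DirectSum.of E m (w m) = (-D : ℤ) • DirectSum.of E m (w m) := by
    intro m hm
    rcases eq_or_ne m D with rfl | hne
    · rfl
    · exact absurd (hw m hne) (DFinsupp.mem_support_iff.mp hm)
  rw [Finset.sum_congr rfl h1, ← Finset.smul_sum]
  congr 1
  have := DFinsupp.sum_single (f := w)
  rw [DFinsupp.sum] at this
  exact this

lemma dconsV_update0 {n : ℕ} {m : ℤ} {rest : Fin n → ℤ} (v a : E m) (xs : ∀ i, E (rest i)) :
    Function.update (dconsV E v xs) 0 a = dconsV E a xs := by
  funext j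
  rcases j with ⟨jv, hj⟩
  cases jv with
  | zero =>
      have h0 : Function.update (dconsV E v xs) 0 a 0 = a := Function.update_self _ _ _
      exact h0
  | succ i =>
      erw [Function.update_of_ne (by simp [Fin.ext_iff])]
      exact rfl

lemma dcons_sum {n : ℕ} (m : ℤ) (rest : Fin n → ℤ) :
    (∑ j, dcons m rest j) = m + ∑ i, rest i := by
  rw [Fin.sum_univ_succ]
  rfl

end Helpers

section Main
variable {𝕜 : Type} [Field 𝕜] [CharZero 𝕜]
variable {E : ℤ → Type} [∀ i, AddCommGroup (E i)] [∀ i, Module 𝕜 (E i)]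

lemma insGN (v : E 0) (d : ℤ) (G : RawForm E) (hGdeg : IsOfDeg E d G)
    (n : ℕ) (ι : Fin n → ℤ) (x : ∀ j, E (ι j)) :
    ins 𝕜 E G (ofElem E (DirectSum.of E 0 v) + euler E) n ι x
      = (-((∑ j, ι j) + d)) • G n ι x := by
  unfold ins
  rw [Fintype.sum_eq_single (⟨n, n.lt_succ_self⟩ : Fin (n + 1))]
  · rw [shuffle_filter_eq _ (Or.inr le_rfl), Finset.sum_singleton, koszulSign_one, one_smul]
    have key := sum_neg_smul_of
      (G ((⟨n, n.lt_succ_self⟩ : Fin (n+1)) : ℕ)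
        (fun i => ι ((1 : Equiv.Perm (Fin n)) ⟨(i : ℕ), by omega⟩))
        (fun i => x ((1 : Equiv.Perm (Fin n)) ⟨(i : ℕ), by omega⟩)))
      ((∑ j, ι j) + d)
      (hGdeg n _ _)
    refine Eq.trans ?_ key
    rw [DFinsupp.sum, DFinsupp.sum]
    apply Finset.sum_congr rfl
    intro m _
    show (ofElem E (DirectSum.of E 0 v) + euler E) (n - n + 1) _ _ = _
    have hnn : n - n + 1 = 1 := by omega
    show ofElem E (DirectSum.of E 0 v) (n - n + 1) _ _ + euler E (n - n + 1) _ _ = _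
    rw [show ofElem E (DirectSum.of E 0 v) (n - n + 1) _ _ = 0 from if_neg (by omega), zero_add]
    unfold euler
    rw [dif_pos hnn]
    rfl
  · intro k hk
    have hkn : (k : ℕ) ≠ n := fun h => hk (Fin.ext h)
    have hklt : (k : ℕ) < n := lt_of_le_of_ne (Nat.lt_succ_iff.mp k.isLt) hkn
    apply Finset.sum_eq_zero
    intro σ _
    rw [DFinsupp.sum]
    rw [Finset.sum_eq_zero, smul_zero]
    intro m _
    show ofElem E (DirectSum.of E 0 v) (n - (k:ℕ) + 1) _ _ + euler E (n - (k:ℕ) + 1) _ _ = 0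
    rw [show ofElem E (DirectSum.of E 0 v) (n - (k:ℕ) + 1) _ _ = 0 from if_neg (by omega)]
    unfold euler
    rw [dif_neg (by omega), add_zero]

def consHom (G : RawForm E)
    (hGadd : ∀ (n : ℕ) (m : ℤ) (rest : Fin n → ℤ) (restV : ∀ i, E (rest i)) (a b : E m),
      G (n+1) (dcons m rest) (dconsV E (a+b) restV)
        = G (n+1) (dcons m rest) (dconsV E a restV) + G (n+1) (dcons m rest) (dconsV E b restV))
    (n : ℕ) (m : ℤ) (rest : Fin n → ℤ) (restV : ∀ i, E (rest i)) :
    E m →+ ⨁ i, E i :=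
  AddMonoidHom.mk' (fun a => G (n+1) (dcons m rest) (dconsV E a restV)) (hGadd n m rest restV)


lemma Napply_eq0 (w : ⨁ i, E i) {a : ℕ} (ι : Fin a → ℤ) (x : ∀ j, E (ι j)) (h : a = 0) :
    (ofElem E w + euler E) a ι x = w := by
  subst h
  show w + euler E 0 ι x = w
  unfold euler
  rw [dif_neg (by omega), add_zero]

lemma Napply_eq1 (w : ⨁ i, E i) {a : ℕ} (ι : Fin a → ℤ) (x : ∀ j, E (ι j)) (h : a = 1) :
    (ofElem E w + euler E) a ι x
      = DirectSum.of E (ι ⟨0, by omega⟩) ((-(ι ⟨0, by omega⟩) : ℤ) • x ⟨0, by omega⟩) := by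
  subst h
  show (0 : ⨁ i, E i) + euler E 1 ι x = _
  rw [zero_add]
  unfold euler
  rw [dif_pos rfl]
  exact (map_zsmul (DirectSum.of E (ι ⟨0, Nat.one_pos⟩)) (-(ι ⟨0, Nat.one_pos⟩)) (x ⟨0, Nat.one_pos⟩)).symm

lemma Napply_ge2 (w : ⨁ i, E i) {a : ℕ} (ι : Fin a → ℤ) (x : ∀ j, E (ι j)) (h : 2 ≤ a) :
    (ofElem E w + euler E) a ι x = 0 := by
  show ofElem E w a ι x + euler E a ι x = 0
  unfold ofElem euler
  rw [if_neg (by omega), dif_neg (by omega), add_zero]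

lemma insNG (v : E 0) (G : RawForm E)
    (hG3 : ∀ n, 3 ≤ n → ∀ (ι : Fin n → ℤ) (x : ∀ j, E (ι j)), G n ι x = 0)
    (hGadd : ∀ (n : ℕ) (m : ℤ) (rest : Fin n → ℤ) (restV : ∀ i, E (rest i)) (a b : E m),
      G (n+1) (dcons m rest) (dconsV E (a+b) restV)
        = G (n+1) (dcons m rest) (dconsV E a restV) + G (n+1) (dcons m rest) (dconsV E b restV))
    (hGsym : ∀ (ι : Fin 2 → ℤ) (x : ∀ j, E (ι j)),
      G 2 (fun j => ι (Equiv.swap 0 1 j)) (fun j => x (Equiv.swap 0 1 j))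
        = ((-1 : 𝕜) ^ (ι 0 * ι 1)) • G 2 ι x)
    (n : ℕ) (ι : Fin n → ℤ) (x : ∀ j, E (ι j)) :
    ins 𝕜 E (ofElem E (DirectSum.of E 0 v) + euler E) G n ι x
      = G (n + 1) (dcons 0 ι) (dconsV E v x) + (-(∑ j, ι j)) • G n ι x := by
  have hz : ∀ (n : ℕ) (m : ℤ) (rest : Fin n → ℤ) (restV : ∀ i, E (rest i)),
      G (n+1) (dcons m rest) (dconsV E (0 : E m) restV) = 0 :=
    fun n m rest restV => map_zero (consHom G hGadd n m rest restV)
  have hsmul : ∀ (n : ℕ) (m : ℤ) (rest : Fin n → ℤ) (restV : ∀ i, E (rest i)) (c : ℤ) (a : E m),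
      G (n+1) (dcons m rest) (dconsV E (c • a) restV)
        = c • G (n+1) (dcons m rest) (dconsV E a restV) :=
    fun n m rest restV c a => map_zsmul (consHom G hGadd n m rest restV) c a
  unfold ins
  match n, ι, x with
  | 0, ι, x =>
    rw [Fintype.sum_eq_single (⟨0, by omega⟩ : Fin 1)
      (fun b hb => absurd (Subsingleton.elim b _) hb)]
    rw [shuffle_filter_eq (n := 0) _ (Or.inl rfl), Finset.sum_singleton, koszulSign_one, one_smul]
    rw [Napply_eq0 _ _ _ rfl, sum_of_index _ _ (hz _ _ _ _)]
    have : (∑ j : Fin 0, ι j) = 0 := by simp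
    rw [this, neg_zero, zero_smul, add_zero]
    exact rawCongr_cons G 0 (fun i => i.elim0) v (fun i => i.elim0)
  | 1, ι, x =>
    rw [Fintype.sum_eq_add (⟨0, by omega⟩ : Fin 2) (⟨1, by omega⟩ : Fin 2)
      (by simp [Fin.ext_iff]) (fun c hc => by
        exfalso
        rcases c with ⟨cv, hcv⟩
        rcases hc with ⟨hc0, hc1⟩
        interval_cases cv
        · exact hc0 rfl
        · exact hc1 rfl)]
    rw [shuffle_filter_eq (n := 1) _ (Or.inl rfl), Finset.sum_singleton, koszulSign_one, one_smul]
    rw [Napply_eq0 _ _ _ rfl, sum_of_index _ _ (hz _ _ _ _)]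
    rw [shuffle_filter_eq (n := 1) _ (Or.inr (le_refl 1)), Finset.sum_singleton,
      koszulSign_one, one_smul]
    rw [Napply_eq1 _ _ _ rfl, sum_of_index _ _ (hz _ _ _ _), hsmul]
    rw [Fin.sum_univ_one]
    refine congrArg₂ (· + ·) ?_ ?_
    · exact rawCongr_cons G 0
        (fun i => congrArg ι (Fin.ext (Nat.zero_add i.1)))
        v (fun i => heq_arg x (Fin.ext (Nat.zero_add i.1)))
    · refine congrArg₂ (· • ·) rfl ?_
      refine rawCongr G ?_ ?_
      · rintro ⟨jv, hj⟩
        interval_cases jv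
        · rfl
      · rintro ⟨jv, hj⟩
        interval_cases jv
        · exact HEq.rfl
  | 2, ι, x =>
    rw [Fintype.sum_eq_add (⟨0, by omega⟩ : Fin 3) (⟨1, by omega⟩ : Fin 3)
      (by simp [Fin.ext_iff]) (fun c hc => by
        rcases c with ⟨cv, hcv⟩
        obtain ⟨hc0, hc1⟩ := hc
        have hval : cv = 2 := by
          simp only [ne_eq, Fin.ext_iff] at hc0 hc1
          omega
        apply Finset.sum_eq_zero
        intro σ _
        rw [Napply_ge2 (a := ((⟨cv, hcv⟩ : Fin 3) : ℕ)) _ _ _ (le_of_eq hval.symm),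
          DFinsupp.sum_zero_index, smul_zero])]
    -- k = 0 term
    rw [shuffle_filter_eq (n := 2) _ (Or.inl rfl), Finset.sum_singleton, koszulSign_one, one_smul]
    rw [Napply_eq0 _ _ _ rfl, sum_of_index _ _ (hz _ _ _ _)]
    -- k = 1 term
    rw [shuffle1_filter_two, perm_two_univ, Finset.sum_insert (by decide),
      Finset.sum_singleton]
    rw [koszulSign_one, one_smul, koszulSign_swap2]
    rw [Napply_eq1 _ _ _ rfl, sum_of_index _ _ (hz _ _ _ _), hsmul]
    rw [Napply_eq1 _ _ _ rfl, sum_of_index _ _ (hz _ _ _ _), hsmul]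
    rw [Fin.sum_univ_two]
    have eid : G (2 - ((⟨1, by omega⟩ : Fin 3) : ℕ) + 1)
        (dcons (ι ((1 : Equiv.Perm (Fin 2)) ⟨((⟨0, by omega⟩ : Fin 1) : ℕ), by omega⟩))
          (fun i => ι ((1 : Equiv.Perm (Fin 2)) ⟨((⟨1, by omega⟩ : Fin 3) : ℕ) + (i : ℕ), by omega⟩)))
        (dconsV E (x ((1 : Equiv.Perm (Fin 2)) ⟨((⟨0, by omega⟩ : Fin 1) : ℕ), by omega⟩))
          (fun i => x ((1 : Equiv.Perm (Fin 2)) ⟨((⟨1, by omega⟩ : Fin 3) : ℕ) + (i : ℕ), by omega⟩)))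
        = G 2 ι x := by
      refine rawCongr G ?_ ?_
      · rintro ⟨jv, hj⟩
        interval_cases jv
        · rfl
        · rfl
      · rintro ⟨jv, hj⟩
        interval_cases jv
        · exact HEq.rfl
        · exact HEq.rfl
    have esw : G (2 - ((⟨1, by omega⟩ : Fin 3) : ℕ) + 1)
        (dcons (ι (Equiv.swap 0 1 ⟨((⟨0, by omega⟩ : Fin 1) : ℕ), by omega⟩))
          (fun i => ι (Equiv.swap 0 1 ⟨((⟨1, by omega⟩ : Fin 3) : ℕ) + (i : ℕ), by omega⟩)))
        (dconsV E (x (Equiv.swap 0 1 ⟨((⟨0, by omega⟩ : Fin 1) : ℕ), by omega⟩))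
          (fun i => x (Equiv.swap 0 1 ⟨((⟨1, by omega⟩ : Fin 3) : ℕ) + (i : ℕ), by omega⟩)))
        = G 2 (fun j => ι (Equiv.swap 0 1 j)) (fun j => x (Equiv.swap 0 1 j)) := by
      refine rawCongr G ?_ ?_
      · rintro ⟨jv, hj⟩
        interval_cases jv
        · rfl
        · show ι (Equiv.swap 0 1 ⟨1 + ((⟨0, by omega⟩ : Fin 1) : ℕ), by omega⟩) = _
          exact congrArg ι (congrArg (Equiv.swap 0 1) (Fin.ext rfl))
      · rintro ⟨jv, hj⟩
        interval_cases jv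
        · exact HEq.rfl
        · exact HEq.rfl
    refine congrArg₂ (· + ·) ?_ ?_
    · exact rawCongr_cons G 0
        (fun i => congrArg ι (Fin.ext (Nat.zero_add i.1)))
        v (fun i => heq_arg x (Fin.ext (Nat.zero_add i.1)))
    · rw [eid, esw, hGsym ι x]
      show (-(ι 0) : ℤ) • G 2 ι x
          + ((-1 : 𝕜) ^ (ι 1 * ι 0)) • ((-(ι 1) : ℤ) • (((-1 : 𝕜) ^ (ι 0 * ι 1)) • G 2 ι x))
          = (-(ι 0 + ι 1)) • G 2 ι x
      have key : ((-1 : 𝕜) ^ (ι 1 * ι 0)) • ((-(ι 1) : ℤ) • (((-1 : 𝕜) ^ (ι 0 * ι 1)) • G 2 ι x))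
          = (-(ι 1) : ℤ) • G 2 ι x := by
        rw [smul_comm ((-1 : 𝕜) ^ (ι 1 * ι 0)) (-(ι 1) : ℤ), smul_smul,
          mul_comm (ι 0) (ι 1), ← zpow_add₀ (by norm_num : (-1 : 𝕜) ≠ 0), ← two_mul, zpow_mul]
        norm_num
      rw [key, ← add_smul]
      congr 1
      ring
  | (m + 3), ι, x =>
    rw [hG3 (m + 3 + 1) (by omega) (dcons 0 ι) (dconsV E v x), hG3 (m + 3) (by omega) ι x,
      smul_zero, add_zero]
    apply Finset.sum_eq_zero
    rintro ⟨kv, hkv⟩ -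
    match kv, hkv with
    | 0, hkv =>
      rw [shuffle_filter_eq (n := m+3) _ (Or.inl rfl), Finset.sum_singleton, koszulSign_one,
        one_smul, Napply_eq0 _ _ _ rfl, sum_of_index _ _ (hz _ _ _ _)]
      exact hG3 _ ((by omega : (3:ℕ) ≤ m + 3 - 0 + 1)) _ _
    | 1, hkv =>
      apply Finset.sum_eq_zero
      intro σ _
      rw [DFinsupp.sum, Finset.sum_eq_zero, smul_zero]
      intro m' _
      exact hG3 (m + 3 - 1 + 1) (by omega) _ _
    | (k + 2), hkv =>
      apply Finset.sum_eq_zero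
      intro σ _
      rw [Napply_ge2 (a := ((⟨k + 2, hkv⟩ : Fin (m + 3 + 1)) : ℕ)) _ _ _ (Nat.le_add_left 2 k),
        DFinsupp.sum_zero_index, smul_zero]

lemma mainRnb (v : E 0) (d d' : ℤ) (G : RawForm E)
    (hG3 : ∀ n, 3 ≤ n → ∀ (ι : Fin n → ℤ) (x : ∀ j, E (ι j)), G n ι x = 0)
    (hGdeg : IsOfDeg E d G)
    (hGadd : ∀ (n : ℕ) (m : ℤ) (rest : Fin n → ℤ) (restV : ∀ i, E (rest i)) (a b : E m),
      G (n+1) (dcons m rest) (dconsV E (a+b) restV)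
        = G (n+1) (dcons m rest) (dconsV E a restV) + G (n+1) (dcons m rest) (dconsV E b restV))
    (hGsym : ∀ (ι : Fin 2 → ℤ) (x : ∀ j, E (ι j)),
      G 2 (fun j => ι (Equiv.swap 0 1 j)) (fun j => x (Equiv.swap 0 1 j))
        = ((-1 : 𝕜) ^ (ι 0 * ι 1)) • G 2 ι x)
    (n : ℕ) (ι : Fin n → ℤ) (x : ∀ j, E (ι j)) :
    rnb 𝕜 E 0 d' (ofElem E (DirectSum.of E 0 v) + euler E) G n ι x
      = G (n + 1) (dcons 0 ι) (dconsV E v x) + d • G n ι x := by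
  show ins 𝕜 E _ G n ι x - ((-1 : 𝕜) ^ ((0:ℤ) * d')) • ins 𝕜 E G _ n ι x = _
  rw [zero_mul, zpow_zero, one_smul, insNG v G hG3 hGadd hGsym n ι x, insGN v d G hGdeg n ι x]
  rw [add_sub_assoc, ← sub_smul]
  congr 1
  ring

lemma multilin_cons_add {F : RawForm E} (hF : IsMultilin 𝕜 E F) (n : ℕ) (m : ℤ)
    (rest : Fin n → ℤ) (restV : ∀ i, E (rest i)) (a b : E m) :
    F (n+1) (dcons m rest) (dconsV E (a+b) restV)
      = F (n+1) (dcons m rest) (dconsV E a restV) + F (n+1) (dcons m rest) (dconsV E b restV) := by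
  have h := (hF (n+1) (dcons m rest) (dconsV E a restV) 0 a b 1).1
  erw [dconsV_update0, dconsV_update0, dconsV_update0] at h
  exact h

lemma dconsV_update1 {n : ℕ} {m0 m1 : ℤ} {rest : Fin n → ℤ} (v : E m0) (w a : E m1)
    (restV : ∀ i, E (rest i)) :
    Function.update (dconsV E v (dconsV E w restV)) 1 a = dconsV E v (dconsV E a restV) := by
  funext j
  rcases j with ⟨jv, hj⟩
  match jv, hj with
  | 0, hj =>
      erw [Function.update_of_ne (by simp [Fin.ext_iff])]
      exact rfl
  | 1, hj =>
      have h0 : Function.update (dconsV E v (dconsV E w restV)) 1 a 1 = a :=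
        Function.update_self _ _ _
      exact h0
  | (i+2), hj =>
      erw [Function.update_of_ne (by simp [Fin.ext_iff])]
      exact rfl

lemma multilin_cons_add1 {F : RawForm E} (hF : IsMultilin 𝕜 E F) (n : ℕ) (m0 m1 : ℤ)
    (rest : Fin n → ℤ) (restV : ∀ i, E (rest i)) (v : E m0) (a b : E m1) :
    F (n+2) (dcons m0 (dcons m1 rest)) (dconsV E v (dconsV E (a+b) restV))
      = F (n+2) (dcons m0 (dcons m1 rest)) (dconsV E v (dconsV E a restV))
        + F (n+2) (dcons m0 (dcons m1 rest)) (dconsV E v (dconsV E b restV)) := by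
  have h := (hF (n+2) (dcons m0 (dcons m1 rest)) (dconsV E v (dconsV E a restV)) 1 a b 1).1
  erw [dconsV_update1, dconsV_update1, dconsV_update1] at h
  exact h

lemma ofElem_zero_apply (n : ℕ) (ι : Fin n → ℤ) (x : ∀ j, E (ι j)) :
    ofElem E (0 : ⨁ i, E i) n ι x = 0 := by
  unfold ofElem
  split_ifs <;> rfl

end Main

section Thm
variable {𝕜 : Type} [Field 𝕜] [CharZero 𝕜]
variable {E : ℤ → Type} [∀ i, AddCommGroup (E i)] [∀ i, Module 𝕜 (E i)]

theorem statement13' (C : E 1) (l1 l2 : RawForm E)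
    (h1 : IsSVF 𝕜 E 1 l1) (h1a : IsArity E 1 l1)
    (h2 : IsSVF 𝕜 E 1 l2) (h2a : IsArity E 2 l2)
    (μ : RawForm E) (hμ : μ = ofElem E (DirectSum.of E 1 C) + l1 + l2)
    (hμμ : rnb 𝕜 E 1 1 μ μ = 0) (π : E 0) :
    (rnb 𝕜 E 0 1 (ofElem E (DirectSum.of E 0 π) + euler E)
          (rnb 𝕜 E 0 1 (ofElem E (DirectSum.of E 0 π) + euler E) μ) =
        rnb 𝕜 E 0 1 ((2 : ℤ) • ofElem E (DirectSum.of E 0 π) + euler E) μ ∧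
      rnb 𝕜 E 0 0 (ofElem E (DirectSum.of E 0 π) + euler E)
        ((2 : ℤ) • ofElem E (DirectSum.of E 0 π) + euler E) = 0) ↔
      l2 2 (fun _ => (0 : ℤ)) (fun _ => π) = 0 := by
  -- facts about μ
  have hμ3 : ∀ n, 3 ≤ n → ∀ (ι : Fin n → ℤ) (x : ∀ j, E (ι j)), μ n ι x = 0 := by
    intro n hn ι x
    rw [hμ]
    show ofElem E (DirectSum.of E 1 C) n ι x + l1 n ι x + l2 n ι x = 0
    rw [h1a n (by omega), h2a n (by omega)]
    unfold ofElem
    rw [if_neg (by omega), add_zero, add_zero]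
  have hμ2 : ∀ (ι : Fin 2 → ℤ) (x : ∀ j, E (ι j)), μ 2 ι x = l2 2 ι x := by
    intro ι x
    rw [hμ]
    show ofElem E (DirectSum.of E 1 C) 2 ι x + l1 2 ι x + l2 2 ι x = _
    rw [h1a 2 (by omega)]
    unfold ofElem
    rw [if_neg (by omega), add_zero, zero_add]
  have hμdeg : IsOfDeg E 1 μ := by
    intro n ι x m hm
    rw [hμ]
    show (ofElem E (DirectSum.of E 1 C) n ι x + l1 n ι x + l2 n ι x) m = 0
    rw [DirectSum.add_apply, DirectSum.add_apply, h1.2.2 n ι x m hm, h2.2.2 n ι x m hm,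
      add_zero, add_zero]
    unfold ofElem
    split_ifs with h
    · subst h
      refine DirectSum.of_eq_of_ne _ _ _ ?_
      intro hc
      apply hm
      rw [← hc]
      simp
    · rfl
  have hμmult : IsMultilin 𝕜 E μ := by
    intro n ι x j a b c
    have hn : n ≠ 0 := by have := j.isLt; omega
    have hof : ∀ (y : ∀ j, E (ι j)), ofElem E (DirectSum.of E 1 C) n ι y = 0 := by
      intro y; unfold ofElem; rw [if_neg hn]
    have e1 := h1.1 n ι x j a b c
    have e2 := h2.1 n ι x j a b c
    constructor
    · rw [hμ]
      show ofElem E (DirectSum.of E 1 C) n ι _ + l1 n ι _ + l2 n ι _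
        = (ofElem E (DirectSum.of E 1 C) n ι _ + l1 n ι _ + l2 n ι _)
          + (ofElem E (DirectSum.of E 1 C) n ι _ + l1 n ι _ + l2 n ι _)
      rw [hof, hof, hof, e1.1, e2.1]
      abel
    · rw [hμ]
      show ofElem E (DirectSum.of E 1 C) n ι _ + l1 n ι _ + l2 n ι _
        = c • (ofElem E (DirectSum.of E 1 C) n ι _ + l1 n ι _ + l2 n ι _)
      rw [hof, hof, e1.2, e2.2, smul_add, smul_add, smul_zero]
  have hμaddc := multilin_cons_add hμmult
  have hμsym2 : ∀ (ι : Fin 2 → ℤ) (x : ∀ j, E (ι j)),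
      μ 2 (fun j => ι (Equiv.swap 0 1 j)) (fun j => x (Equiv.swap 0 1 j))
        = ((-1 : 𝕜) ^ (ι 0 * ι 1)) • μ 2 ι x := by
    intro ι x
    rw [hμ2, hμ2]
    exact h2.2.1 2 ι x 0 1 rfl
  -- B = [N, μ]
  have hμB : ∀ (n : ℕ) (ι : Fin n → ℤ) (x : ∀ j, E (ι j)),
      rnb 𝕜 E 0 1 (ofElem E (DirectSum.of E 0 π) + euler E) μ n ι x
        = μ (n+1) (dcons 0 ι) (dconsV E π x) + μ n ι x := by
    intro n ι x
    rw [mainRnb π 1 1 μ hμ3 hμdeg hμaddc hμsym2 n ι x, one_smul]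
  set Bex : RawForm E := fun n ι x => μ (n+1) (dcons 0 ι) (dconsV E π x) + μ n ι x with hBex
  have hBfun : rnb 𝕜 E 0 1 (ofElem E (DirectSum.of E 0 π) + euler E) μ = Bex :=
    funext fun n => funext fun ι => funext fun x => hμB n ι x
  have hB3 : ∀ n, 3 ≤ n → ∀ (ι : Fin n → ℤ) (x : ∀ j, E (ι j)), Bex n ι x = 0 := by
    intro n hn ι x
    show μ (n+1) _ _ + μ n ι x = 0
    rw [hμ3 (n+1) (by omega), hμ3 n (by omega), add_zero]
  have hBdeg : IsOfDeg E 1 Bex := by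
    intro n ι x m hm
    show (μ (n+1) (dcons 0 ι) (dconsV E π x) + μ n ι x) m = 0
    rw [DirectSum.add_apply, hμdeg n ι x m hm,
      hμdeg (n+1) (dcons 0 ι) (dconsV E π x) m (by rw [dcons_sum]; omega), add_zero]
  have hBaddc : ∀ (n : ℕ) (m : ℤ) (rest : Fin n → ℤ) (restV : ∀ i, E (rest i)) (a b : E m),
      Bex (n+1) (dcons m rest) (dconsV E (a+b) restV)
        = Bex (n+1) (dcons m rest) (dconsV E a restV)
          + Bex (n+1) (dcons m rest) (dconsV E b restV) := by
    intro n m rest restV a b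
    show μ (n+1+1) (dcons 0 (dcons m rest)) (dconsV E π (dconsV E (a+b) restV))
        + μ (n+1) (dcons m rest) (dconsV E (a+b) restV) = _
    rw [multilin_cons_add1 hμmult, multilin_cons_add hμmult]
    simp only [hBex]
    abel
  have hBsym2 : ∀ (ι : Fin 2 → ℤ) (x : ∀ j, E (ι j)),
      Bex 2 (fun j => ι (Equiv.swap 0 1 j)) (fun j => x (Equiv.swap 0 1 j))
        = ((-1 : 𝕜) ^ (ι 0 * ι 1)) • Bex 2 ι x := by
    intro ι x
    show μ 3 _ _ + μ 2 _ _ = ((-1 : 𝕜) ^ (ι 0 * ι 1)) • (μ 3 (dcons 0 ι) (dconsV E π x) + μ 2 ι x)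
    rw [hμ3 3 (by omega), hμ3 3 (by omega), zero_add, zero_add]
    exact hμsym2 ι x
  have hNB : ∀ (n : ℕ) (ι : Fin n → ℤ) (x : ∀ j, E (ι j)),
      rnb 𝕜 E 0 1 (ofElem E (DirectSum.of E 0 π) + euler E)
        (rnb 𝕜 E 0 1 (ofElem E (DirectSum.of E 0 π) + euler E) μ) n ι x
        = Bex (n+1) (dcons 0 ι) (dconsV E π x) + Bex n ι x := by
    intro n ι x
    rw [hBfun, mainRnb π 1 1 Bex hB3 hBdeg hBaddc hBsym2 n ι x, one_smul]
  -- the square 2π + S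
  have hKf : (2 : ℤ) • ofElem E (DirectSum.of E 0 π) + euler E
      = ofElem E (DirectSum.of E 0 ((2:ℤ) • π)) + euler E := by
    congr 1
    funext n ι x
    show (2 : ℤ) • ofElem E (DirectSum.of E 0 π) n ι x = ofElem E (DirectSum.of E 0 ((2:ℤ) • π)) n ι x
    unfold ofElem
    split_ifs
    · exact (map_zsmul (DirectSum.of E 0) 2 π).symm
    · exact smul_zero _
  have hKμ : ∀ (n : ℕ) (ι : Fin n → ℤ) (x : ∀ j, E (ι j)),
      rnb 𝕜 E 0 1 ((2 : ℤ) • ofElem E (DirectSum.of E 0 π) + euler E) μ n ι x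
        = μ (n+1) (dcons 0 ι) (dconsV E ((2:ℤ) • π) x) + μ n ι x := by
    intro n ι x
    rw [hKf, mainRnb ((2:ℤ) • π) 1 1 μ hμ3 hμdeg hμaddc hμsym2 n ι x, one_smul]
  have h2smul : ∀ (n : ℕ) (ι : Fin n → ℤ) (x : ∀ j, E (ι j)),
      μ (n+1) (dcons 0 ι) (dconsV E ((2:ℤ) • π) x)
        = (2:ℤ) • μ (n+1) (dcons 0 ι) (dconsV E π x) :=
    fun n ι x => map_zsmul (consHom μ hμaddc n 0 ι x) 2 π
  have hkey : ∀ (n : ℕ) (ι : Fin n → ℤ) (x : ∀ j, E (ι j)),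
      μ (n+2) (dcons 0 (dcons 0 ι)) (dconsV E π (dconsV E π x))
        = ofElem E (l2 2 (fun _ => (0:ℤ)) (fun _ => π)) n ι x := by
    intro n ι x
    unfold ofElem
    split_ifs with h
    · subst h
      refine Eq.trans (hμ2 (dcons 0 (dcons 0 ι)) (dconsV E π (dconsV E π x))) ?_
      refine rawCongr l2 ?_ ?_
      · rintro ⟨jv, hj⟩
        interval_cases jv
        · rfl
        · rfl
      · rintro ⟨jv, hj⟩
        interval_cases jv
        · exact HEq.rfl
        · exact HEq.rfl
    · exact hμ3 (n+2) (by omega) _ _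
  constructor
  · rintro ⟨heq, -⟩
    have h0 := congrFun (congrFun (congrFun heq 0) (fun j => j.elim0))
      (fun j => (j : Fin 0).elim0)
    rw [hNB, hKμ, h2smul] at h0
    have h0' : μ (0+2) (dcons 0 (dcons 0 (fun j => j.elim0)))
          (dconsV E π (dconsV E π (fun j => (j : Fin 0).elim0)))
        + μ (0+1) (dcons 0 (fun j => j.elim0)) (dconsV E π (fun j => (j : Fin 0).elim0))
        + (μ (0+1) (dcons 0 (fun j => j.elim0)) (dconsV E π (fun j => (j : Fin 0).elim0))
          + μ 0 (fun j => j.elim0) (fun j => (j : Fin 0).elim0))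
        = (2:ℤ) • μ (0+1) (dcons 0 (fun j => j.elim0)) (dconsV E π (fun j => (j : Fin 0).elim0))
          + μ 0 (fun j => j.elim0) (fun j => (j : Fin 0).elim0) := h0
    rw [hkey, two_smul] at h0'
    have hz : ofElem E (l2 2 (fun _ => (0:ℤ)) (fun _ => π)) 0 (fun j => j.elim0)
        (fun j => (j : Fin 0).elim0) = 0 := by
      refine add_right_cancel (b := μ (0+1) (dcons 0 (fun j => j.elim0))
          (dconsV E π (fun j => (j : Fin 0).elim0))
        + (μ (0+1) (dcons 0 (fun j => j.elim0)) (dconsV E π (fun j => (j : Fin 0).elim0))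
          + μ 0 (fun j => j.elim0) (fun j => (j : Fin 0).elim0))) ?_
      exact Eq.trans (Eq.trans (by abel) (Eq.trans h0' (by abel))) (zero_add _).symm
    rw [show ofElem E (l2 2 (fun _ => (0:ℤ)) (fun _ => π)) 0 (fun j => j.elim0)
        (fun j => (j : Fin 0).elim0) = l2 2 (fun _ => (0:ℤ)) (fun _ => π) from if_pos rfl] at hz
    exact hz
  · intro hl2
    constructor
    · funext n ι x
      rw [hNB, hKμ, h2smul]
      show μ (n+2) (dcons 0 (dcons 0 ι)) (dconsV E π (dconsV E π x))
          + μ (n+1) (dcons 0 ι) (dconsV E π x)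
          + (μ (n+1) (dcons 0 ι) (dconsV E π x) + μ n ι x)
        = (2:ℤ) • μ (n+1) (dcons 0 ι) (dconsV E π x) + μ n ι x
      rw [hkey, hl2, ofElem_zero_apply, two_smul]
      abel
    · -- [N, K] = 0
      rw [hKf]
      funext n ι x
      have hK3 : ∀ nn, 3 ≤ nn → ∀ (ι : Fin nn → ℤ) (x : ∀ j, E (ι j)),
          (ofElem E (DirectSum.of E 0 ((2:ℤ) • π)) + euler E) nn ι x = 0 := by
        intro nn hnn ι x
        show ofElem E _ nn ι x + euler E nn ι x = 0
        unfold ofElem euler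
        rw [if_neg (by omega), dif_neg (by omega), add_zero]
      have hKdeg : IsOfDeg E 0 (ofElem E (DirectSum.of E 0 ((2:ℤ) • π)) + euler E) := by
        intro nn ι x m hm
        show (ofElem E _ nn ι x + euler E nn ι x) m = 0
        match nn, ι, x with
        | 0, ι, x =>
          rw [DirectSum.add_apply]
          show (DirectSum.of E 0 ((2:ℤ) • π)) m + (0 : ⨁ i, E i) m = 0
          rw [DirectSum.zero_apply, add_zero]
          refine DirectSum.of_eq_of_ne _ _ _ ?_
          intro hc
          apply hm
          rw [← hc]
          simp
        | 1, ι, x =>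
          rw [DirectSum.add_apply]
          show (0 : ⨁ i, E i) m
              + ((-(ι ⟨0, Nat.one_pos⟩)) • DirectSum.of E (ι ⟨0, Nat.one_pos⟩) (x ⟨0, Nat.one_pos⟩)) m = 0
          rw [DirectSum.zero_apply, zero_add, DFinsupp.smul_apply]
          rw [DirectSum.of_eq_of_ne _ _ _ (by
            intro hc
            apply hm
            rw [hc, Fin.sum_univ_one, add_zero]
            rfl), smul_zero]
        | (nn+2), ι, x =>
          show ((if (nn+2 : ℕ) = 0 then DirectSum.of E 0 ((2:ℤ) • π) else 0) + euler E (nn+2) ι x) m = 0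
          rw [if_neg (by omega)]
          unfold euler
          rw [dif_neg (by omega), add_zero, DirectSum.zero_apply]
      have hKadd : ∀ (nn : ℕ) (m : ℤ) (rest : Fin nn → ℤ) (restV : ∀ i, E (rest i)) (a b : E m),
          (ofElem E (DirectSum.of E 0 ((2:ℤ) • π)) + euler E) (nn+1) (dcons m rest) (dconsV E (a+b) restV)
            = (ofElem E (DirectSum.of E 0 ((2:ℤ) • π)) + euler E) (nn+1) (dcons m rest) (dconsV E a restV)
              + (ofElem E (DirectSum.of E 0 ((2:ℤ) • π)) + euler E) (nn+1) (dcons m rest) (dconsV E b restV) := by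
        intro nn m rest restV a b
        match nn with
        | 0 =>
          show (0 : ⨁ i, E i) + (-(m : ℤ)) • DirectSum.of E m (a + b)
            = ((0 : ⨁ i, E i) + (-(m : ℤ)) • DirectSum.of E m a)
              + ((0 : ⨁ i, E i) + (-(m : ℤ)) • DirectSum.of E m b)
          rw [zero_add, zero_add, zero_add, map_add, smul_add]
        | (nn+1) =>
          have hzz : ∀ (y : ∀ j, E (dcons m rest j)),
              (ofElem E (DirectSum.of E 0 ((2:ℤ) • π)) + euler E) (nn+1+1) (dcons m rest) y = 0 := by
            intro y
            show ofElem E _ (nn+2) _ _ + euler E (nn+2) _ _ = 0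
            unfold ofElem euler
            rw [if_neg (by omega), dif_neg (by omega), add_zero]
          rw [hzz, hzz, hzz, add_zero]
      have hKsym : ∀ (ι : Fin 2 → ℤ) (x : ∀ j, E (ι j)),
          (ofElem E (DirectSum.of E 0 ((2:ℤ) • π)) + euler E) 2
              (fun j => ι (Equiv.swap 0 1 j)) (fun j => x (Equiv.swap 0 1 j))
            = ((-1 : 𝕜) ^ (ι 0 * ι 1)) •
              (ofElem E (DirectSum.of E 0 ((2:ℤ) • π)) + euler E) 2 ι x := by
        intro ι x
        have hzz : ∀ (ι : Fin 2 → ℤ) (x : ∀ j, E (ι j)),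
            (ofElem E (DirectSum.of E 0 ((2:ℤ) • π)) + euler E) 2 ι x = 0 := by
          intro ι x
          show ofElem E _ 2 ι x + euler E 2 ι x = 0
          unfold ofElem euler
          rw [if_neg (by omega), dif_neg (by omega), add_zero]
        rw [hzz, hzz, smul_zero]
      rw [mainRnb π 0 0 _ hK3 hKdeg hKadd hKsym n ι x, zero_smul, add_zero]
      show (ofElem E (DirectSum.of E 0 ((2:ℤ) • π)) + euler E) (n+1) (dcons 0 ι) (dconsV E π x)
        = (0 : RawForm E) n ι x
      match n, ι, x with
      | 0, ι, x =>
        show (0 : ⨁ i, E i) + (-(0 : ℤ)) • DirectSum.of E 0 π = _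
        rw [zero_add, neg_zero, zero_smul]
        rfl
      | (n+1), ι, x =>
        show ofElem E _ (n+2) _ _ + euler E (n+2) _ _ = _
        unfold ofElem euler
        rw [if_neg (by omega), dif_neg (by omega), add_zero]
        rfl
end Thm


/-- Let `μ = C + l₁ + l₂` be a curved symmetric DGLA structure on `E`
(a curved `L∞`-structure whose only components are a 0-form `C ∈ E₁`, a symmetric vector
valued 1-form `l₁` of degree `+1` and a symmetric vector valued 2-form `l₂` of degree `+1`),
and `π ∈ E₀`.  Then `π + S` is a Nijenhuis vector valued form (with curvature) with respect
to `μ`, with square `2π + S`, iff `π` is a Poisson element, i.e. `l₂(π,π) = 0`. -/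
theorem statement13 (𝕜 : Type) [Field 𝕜] [CharZero 𝕜]
    (E : ℤ → Type) [∀ i, AddCommGroup (E i)] [∀ i, Module 𝕜 (E i)]
    (C : E 1) (l1 l2 : RawForm E)
    (h1 : IsSVF 𝕜 E 1 l1) (h1a : IsArity E 1 l1)
    (h2 : IsSVF 𝕜 E 1 l2) (h2a : IsArity E 2 l2)
    (μ : RawForm E) (hμ : μ = ofElem E (DirectSum.of E 1 C) + l1 + l2)
    (hμμ : rnb 𝕜 E 1 1 μ μ = 0) (π : E 0) :
    (rnb 𝕜 E 0 1 (ofElem E (DirectSum.of E 0 π) + euler E)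
          (rnb 𝕜 E 0 1 (ofElem E (DirectSum.of E 0 π) + euler E) μ) =
        rnb 𝕜 E 0 1 ((2 : ℤ) • ofElem E (DirectSum.of E 0 π) + euler E) μ ∧
      rnb 𝕜 E 0 0 (ofElem E (DirectSum.of E 0 π) + euler E)
        ((2 : ℤ) • ofElem E (DirectSum.of E 0 π) + euler E) = 0) ↔
      l2 2 (fun _ => (0 : ℤ)) (fun _ => π) = 0 := by
  exact statement13' (𝕜 := 𝕜) (E := E) C l1 l2 h1 h1a h2 h2a μ hμ hμμ π

end RN
end
end

section
/- Let (E, l_1, l_2) be a symmetric DGLA and π ∈ E_0 a Poisson element, i.e. l_2(π,π) = 0. Then the deformed structure [π + S, l_1 + l_2]_RN = l_1(π) + (l_1 + l_2(π,·)) + l_2 is a curved symmetric DGLA structure on E with curvature C' = l_1(π), differential d' = l_1 + l_2(π,·), and bracket l_2; explicitly: (a) l_2 is a graded symmetric Lie bracket of degree 1; (b) (l_1 + l_2(π,·))(l_1(π)) = 0; (c) l_2(l_1(π),X) + (l_1 + l_2(π,·))²(X) = 0 for all X ∈ E; (d) l_1 l_2(X,Y) + l_2(π,l_2(X,Y)) +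 l_2(l_1(X) + l_2(π,X),Y) + (−1)^{|X|} l_2(X, l_1(Y) + l_2(π,Y)) = 0 for all homogeneous X, Y ∈ E. -/
open scoped DirectSum

noncomputable section

namespace RN

/-- Let `(E, l₁, l₂)` be a symmetric DGLA (here `D` is the degree-1
differential `l₁` and `B` the degree-1 graded symmetric bracket `l₂`, both given on the total
space `⨁ i, E i`), and let `π ∈ E₀` be a Poisson element, i.e. `l₂(π,π) = 0`.  Then the
deformed structure `[π + S, l₁ + l₂]_RN = l₁(π) + (l₁ + l₂(π,·)) + l₂` is a curved symmetric
DGLA structure on `E` with curvature `C' = l₁(π) ∈ E₁`, differential `d' = l₁ + l₂(π,·)` and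
bracket `l₂`; explicitly:
(a) `l₂` is a graded symmetric Lie bracket of degree 1;
(b) `(l₁ + l₂(π,·))(l₁(π)) = 0`;
(c) `l₂(l₁(π),X) + (l₁ + l₂(π,·))²(X) = 0` for all `X ∈ E`;
(d) `l₁l₂(X,Y) + l₂(π,l₂(X,Y)) + l₂(l₁X + l₂(π,X),Y) + (-1)^{|X|} l₂(X,l₁Y + l₂(π,Y)) = 0`
for all homogeneous `X, Y ∈ E`. -/
theorem statement14 (𝕜 : Type) [Field 𝕜] [CharZero 𝕜]
    (E : ℤ → Type) [∀ i, AddCommGroup (E i)] [∀ i, Module 𝕜 (E i)]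
    (D : (⨁ i, E i) →ₗ[𝕜] ⨁ i, E i)
    (hDdeg : ∀ (i : ℤ) (v : E i) (m : ℤ), m ≠ i + 1 → D (DirectSum.of E i v) m = 0)
    (hDD : ∀ t : ⨁ i, E i, D (D t) = 0)
    (B : (⨁ i, E i) →ₗ[𝕜] (⨁ i, E i) →ₗ[𝕜] ⨁ i, E i)
    (hBdeg : ∀ (i j : ℤ) (v : E i) (w : E j) (m : ℤ), m ≠ i + j + 1 →
      B (DirectSum.of E i v) (DirectSum.of E j w) m = 0)
    (hBsym : ∀ (i j : ℤ) (v : E i) (w : E j),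
      B (DirectSum.of E i v) (DirectSum.of E j w) =
        ((-1 : 𝕜) ^ (i * j)) • B (DirectSum.of E j w) (DirectSum.of E i v))
    (hJac : ∀ (i j k : ℤ) (v : E i) (w : E j) (z : E k),
      B (B (DirectSum.of E i v) (DirectSum.of E j w)) (DirectSum.of E k z) +
          ((-1 : 𝕜) ^ (j * k)) •
            B (B (DirectSum.of E i v) (DirectSum.of E k z)) (DirectSum.of E j w) +
          ((-1 : 𝕜) ^ (i * (j + k))) •
            B (B (DirectSum.of E j w) (DirectSum.of E k z)) (DirectSum.of E i v) = 0)
    (hcompat : ∀ (i j : ℤ) (v : E i) (w : E j),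
      D (B (DirectSum.of E i v) (DirectSum.of E j w)) +
          B (D (DirectSum.of E i v)) (DirectSum.of E j w) +
          ((-1 : 𝕜) ^ i) • B (DirectSum.of E i v) (D (DirectSum.of E j w)) = 0)
    (π : E 0) (hπ : B (DirectSum.of E 0 π) (DirectSum.of E 0 π) = 0) :
    -- the curvature `C' = l₁(π)` lies in `E₁`
    ((∀ m : ℤ, m ≠ 1 → D (DirectSum.of E 0 π) m = 0) ∧
    -- (a) `l₂` is a graded symmetric Lie bracket of degree 1
      ((∀ (i j : ℤ) (v : E i) (w : E j),
          B (DirectSum.of E i v) (DirectSum.of E j w) =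
            ((-1 : 𝕜) ^ (i * j)) • B (DirectSum.of E j w) (DirectSum.of E i v)) ∧
        (∀ (i j k : ℤ) (v : E i) (w : E j) (z : E k),
          B (B (DirectSum.of E i v) (DirectSum.of E j w)) (DirectSum.of E k z) +
              ((-1 : 𝕜) ^ (j * k)) •
                B (B (DirectSum.of E i v) (DirectSum.of E k z)) (DirectSum.of E j w) +
              ((-1 : 𝕜) ^ (i * (j + k))) •
                B (B (DirectSum.of E j w) (DirectSum.of E k z)) (DirectSum.of E i v) = 0) ∧
        (∀ (i j : ℤ) (v : E i) (w : E j) (m : ℤ), m ≠ i + j + 1 →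
          B (DirectSum.of E i v) (DirectSum.of E j w) m = 0))) ∧
    -- (b) `(l₁ + l₂(π,·))(l₁(π)) = 0`
    (D (D (DirectSum.of E 0 π)) + B (DirectSum.of E 0 π) (D (DirectSum.of E 0 π)) = 0) ∧
    -- (c) `l₂(l₁(π),X) + (l₁ + l₂(π,·))²(X) = 0` for all `X ∈ E`
    (∀ X : ⨁ i, E i,
      B (D (DirectSum.of E 0 π)) X +
          (D (D X + B (DirectSum.of E 0 π) X) +
            B (DirectSum.of E 0 π) (D X + B (DirectSum.of E 0 π) X)) = 0) ∧
    -- (d) for all homogeneous `X ∈ E_i`, `Y ∈ E_j`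
    (∀ (i j : ℤ) (v : E i) (w : E j),
      D (B (DirectSum.of E i v) (DirectSum.of E j w)) +
          B (DirectSum.of E 0 π) (B (DirectSum.of E i v) (DirectSum.of E j w)) +
          B (D (DirectSum.of E i v) + B (DirectSum.of E 0 π) (DirectSum.of E i v))
            (DirectSum.of E j w) +
          ((-1 : 𝕜) ^ i) •
            B (DirectSum.of E i v)
              (D (DirectSum.of E j w) + B (DirectSum.of E 0 π) (DirectSum.of E j w)) = 0) := by

  classical
  set pπ := DirectSum.of E 0 π with hpπdef
  -- symmetry of B with π (degree 0)
  have sym0 : ∀ X : ⨁ i, E i, B pπ X = B X pπ := by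
    have hmaps : B pπ = B.flip pπ := by
      apply DirectSum.linearMap_ext
      intro j
      refine LinearMap.ext fun w => ?_
      simpa [DirectSum.lof_eq_of] using hBsym 0 j π w
    intro X
    exact LinearMap.congr_fun hmaps X
  -- division by 2
  have half : ∀ t : ⨁ i, E i, t + t = 0 → t = 0 := by
    intro t ht
    have h2 : (2:𝕜) • t = 0 := by rw [two_smul]; exact ht
    have := congrArg (fun x => ((2:𝕜)⁻¹) • x) h2
    simpa [smul_smul, inv_mul_cancel₀ (two_ne_zero (α := 𝕜))] using this
  -- compatibility with π in first slot, for every X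
  have compatπ : ∀ X : ⨁ i, E i, D (B pπ X) + B (D pπ) X + B pπ (D X) = 0 := by
    have hmaps : (D ∘ₗ B pπ) + B (D pπ) + (B pπ ∘ₗ D) = 0 := by
      apply DirectSum.linearMap_ext
      intro j
      refine LinearMap.ext fun w => ?_
      simpa [DirectSum.lof_eq_of] using hcompat 0 j π w
    intro X
    simpa using LinearMap.congr_fun hmaps X
  -- B π (B π X) = 0
  have Bππ : ∀ X : ⨁ i, E i, B pπ (B pπ X) = 0 := by
    have hmaps : (B pπ ∘ₗ B pπ) = 0 := by
      apply DirectSum.linearMap_ext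
      intro k
      refine LinearMap.ext fun z => ?_
      have hj := hJac 0 0 k π π z
      rw [hπ] at hj
      simp only [map_zero, LinearMap.zero_apply, zero_add, zero_mul, zpow_zero,
        one_smul] at hj
      have h0 : B (B pπ (DirectSum.of E k z)) pπ = 0 := half _ hj
      simpa [DirectSum.lof_eq_of, sym0] using h0
    intro X
    simpa using LinearMap.congr_fun hmaps X
  -- B π (D π) = 0
  have hbd : B pπ (D pπ) = 0 := by
    have h := hcompat 0 0 π π
    rw [hπ] at h
    simp only [map_zero, zero_add, zpow_zero, one_smul, ← sym0] at h
    exact half _ (by rw [← hpπdef, ← sym0] at h; exact h)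
  -- concentration of B π w in degree j+1
  have conc : ∀ (j : ℤ) (w : E j), B pπ (DirectSum.of E j w) =
      DirectSum.of E (j+1) ((B pπ (DirectSum.of E j w)) (j+1)) := by
    intro j w
    refine DFinsupp.ext fun m => ?_
    by_cases hm : m = j + 1
    · subst hm; rw [DirectSum.of_eq_same]
    · rw [DirectSum.of_eq_of_ne _ _ _ hm]
      exact hBdeg 0 j π w m (by omega)
  -- sign computation
  have sign : ∀ i j : ℤ, ((-1:𝕜)^(i*j)) * ((-1:𝕜)^((j+1)*i)) = (-1:𝕜)^i := by
    intro i j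
    rw [← zpow_add₀ (by norm_num : (-1:𝕜) ≠ 0)]
    have he : i * j + (j + 1) * i = 2 * (i * j) + i := by ring
    rw [he, zpow_add₀ (by norm_num : (-1:𝕜) ≠ 0)]
    have : Even (2 * (i * j)) := even_two_mul _
    rw [this.neg_one_zpow, one_mul]
  refine ⟨⟨?_, hBsym, hJac, hBdeg⟩, ?_, ?_, ?_⟩
  · intro m hm
    exact hDdeg 0 π m (by omega)
  · rw [hDD, hbd, add_zero]
  · intro X
    have h1 := compatπ X
    rw [map_add, map_add, hDD X, Bππ X, zero_add, add_zero]
    calc B (D pπ) X + (D (B pπ X) + B pπ (D X))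
        = D (B pπ X) + B (D pπ) X + B pπ (D X) := by abel
      _ = 0 := h1
  · intro i j v w
    have hc := hcompat i j v w
    have hj := hJac 0 i j π v w
    rw [zero_mul, zpow_zero, one_smul, ← sym0] at hj
    have hm : B (B pπ (DirectSum.of E j w)) (DirectSum.of E i v)
        = ((-1:𝕜)^((j+1)*i)) • B (DirectSum.of E i v) (B pπ (DirectSum.of E j w)) := by
      rw [conc j w]
      exact hBsym (j+1) i _ v
    rw [hm, smul_smul, sign i j] at hj
    rw [map_add, map_add, smul_add]
    set a := D (B (DirectSum.of E i v) (DirectSum.of E j w)) with ha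
    set b := B pπ (B (DirectSum.of E i v) (DirectSum.of E j w)) with hb
    set c := B (D (DirectSum.of E i v)) (DirectSum.of E j w) with hcx
    set d := B (B pπ (DirectSum.of E i v)) (DirectSum.of E j w) with hd
    set e := ((-1:𝕜)^i) • B (DirectSum.of E i v) (D (DirectSum.of E j w)) with he2
    set f := ((-1:𝕜)^i) • B (DirectSum.of E i v) (B pπ (DirectSum.of E j w)) with hf
    calc a + b + (c + d) + (e + f) = (a + c + e) + (d + f + b) := by abel
      _ = 0 := by rw [hc, hj]; simp


end RN
end
end

section
/- Let (E → M, ∘, ρ, ⟨·,·⟩) be a pre-Courant algebroid. Then X ∘ (fY) = f·(X ∘ Y) + (ρ(X)f)·Y for all sections X, Y ∈ Γ(E) and all smooth functions f ∈ C^∞(M). -/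
open Bundle
open scoped Manifold

noncomputable section


lemma aux_fsmul
    {EB : Type} [NormedAddCommGroup EB] [NormedSpace ℝ EB]
    {HB : Type} [TopologicalSpace HB] (IB : ModelWithCorners ℝ EB HB)
    (M : Type) [TopologicalSpace M] [ChartedSpace HB M] [IsManifold IB (⊤ : ℕ∞) M]
    (F : Type) [NormedAddCommGroup F] [NormedSpace ℝ F]
    (V : M → Type) [TopologicalSpace (TotalSpace F V)] [∀ x, AddCommGroup (V x)]
    [∀ x, Module ℝ (V x)] [∀ x, TopologicalSpace (V x)]
    [FiberBundle F V] [VectorBundle ℝ F V] [ContMDiffVectorBundle (⊤ : ℕ∞) F V IB]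
    (h : M → ℝ) (hh : ContMDiff IB 𝓘(ℝ, ℝ) (⊤ : ℕ∞) h) (s : ContMDiffSection IB F (⊤ : ℕ∞) V) :
    ContMDiff IB (IB.prod 𝓘(ℝ, F)) (⊤ : ℕ∞) (fun x => TotalSpace.mk' F x (h x • s x)) := by
  intro x₀
  have hs := s.contMDiff x₀
  rw [Bundle.contMDiffAt_section] at hs ⊢
  set e := trivializationAt F V x₀
  refine ((hh x₀).smul hs).congr_of_eventuallyEq ?_
  refine Filter.eventually_of_mem (e.open_baseSet.mem_nhds <|
    FiberBundle.mem_baseSet_trivializationAt F V x₀) ?_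
  intro x hx
  exact (e.linear ℝ hx).2 _ _

lemma aux_D
    {EB : Type} [NormedAddCommGroup EB] [NormedSpace ℝ EB]
    {HB : Type} [TopologicalSpace HB] (IB : ModelWithCorners ℝ EB HB)
    (M : Type) [TopologicalSpace M] [ChartedSpace HB M] [IsManifold IB (⊤ : ℕ∞) M]
    (F : Type) [NormedAddCommGroup F] [NormedSpace ℝ F]
    (V : M → Type) [TopologicalSpace (TotalSpace F V)] [∀ x, AddCommGroup (V x)]
    [∀ x, Module ℝ (V x)] [∀ x, TopologicalSpace (V x)]
    [FiberBundle F V] [VectorBundle ℝ F V] [ContMDiffVectorBundle (⊤ : ℕ∞) F V IB]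
    (ρ : ∀ x, V x →ₗ[ℝ] TangentSpace IB x)
    (hρ : ContMDiff (IB.prod 𝓘(ℝ, F)) IB.tangent (⊤ : ℕ∞)
      (fun p : TotalSpace F V => TotalSpace.mk' EB p.proj (ρ p.proj p.snd)))
    (f : M → ℝ) (hf : ContMDiff IB 𝓘(ℝ, ℝ) (⊤ : ℕ∞) f)
    (X : ContMDiffSection IB F (⊤ : ℕ∞) V) :
    ContMDiff IB 𝓘(ℝ, ℝ) (⊤ : ℕ∞) (fun x => (mfderiv IB 𝓘(ℝ, ℝ) f x (ρ x (X x)) : ℝ)) := by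
  have h1 : ContMDiff IB IB.tangent (⊤ : ℕ∞) (fun x => TotalSpace.mk' EB x (ρ x (X x))) :=
    hρ.comp X.contMDiff
  have h2 : ContMDiff IB.tangent 𝓘(ℝ, ℝ).tangent (⊤ : ℕ∞) (tangentMap IB 𝓘(ℝ, ℝ) f) :=
    hf.contMDiff_tangentMap (by simp)
  have h3 : ContMDiff IB 𝓘(ℝ, ℝ).tangent (⊤ : ℕ∞)
      (fun x => tangentMap IB 𝓘(ℝ, ℝ) f (TotalSpace.mk' EB x (ρ x (X x)))) := h2.comp h1
  intro x₀
  have h4 := (h3 x₀)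
  rw [contMDiffAt_totalSpace] at h4
  have key : ∀ (q : TangentBundle 𝓘(ℝ, ℝ) ℝ),
      (trivializationAt ℝ (TangentSpace 𝓘(ℝ, ℝ))
        (tangentMap IB 𝓘(ℝ, ℝ) f (TotalSpace.mk' EB x₀ (ρ x₀ (X x₀)))).proj q).2 = q.2 := by
    intro q
    rw [TangentBundle.trivializationAt_apply]
    simp [fderivWithin_id, chartAt_self_eq]
    rfl
  refine h4.2.congr_of_eventuallyEq (Filter.Eventually.of_forall fun x => ?_)
  exact (key (tangentMap IB 𝓘(ℝ, ℝ) f (TotalSpace.mk' EB x (ρ x (X x))))).symm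


/-- Let `(E → M, ∘, ρ, ⟨·,·⟩)` be a pre-Courant algebroid: a smooth vector
bundle `V` over a smooth manifold `M` with a fiberwise nondegenerate symmetric bilinear form
`g`, a (smooth) anchor `ρ : E → TM`, and an `ℝ`-bilinear operation `∘` on smooth sections
satisfying `ρ(X)⟨Y,Z⟩ = ⟨X∘Y,Z⟩ + ⟨Y,X∘Z⟩` and `ρ(X)⟨Y,Z⟩ = ⟨X,Y∘Z⟩ + ⟨X,Z∘Y⟩`.
Then `X ∘ (fY) = f·(X∘Y) + (ρ(X)f)·Y` for all sections `X, Y` and smooth functions `f`. -/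
theorem statement19
    {EB : Type} [NormedAddCommGroup EB] [NormedSpace ℝ EB]
    {HB : Type} [TopologicalSpace HB] (IB : ModelWithCorners ℝ EB HB)
    (M : Type) [TopologicalSpace M] [ChartedSpace HB M] [IsManifold IB (⊤ : ℕ∞) M]
    (F : Type) [NormedAddCommGroup F] [NormedSpace ℝ F]
    (V : M → Type) [TopologicalSpace (TotalSpace F V)] [∀ x, AddCommGroup (V x)]
    [∀ x, Module ℝ (V x)] [∀ x, TopologicalSpace (V x)]
    [FiberBundle F V] [VectorBundle ℝ F V] [ContMDiffVectorBundle (⊤ : ℕ∞) F V IB]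
    -- the fiberwise inner product
    (g : ∀ x, V x →ₗ[ℝ] V x →ₗ[ℝ] ℝ)
    (hgsymm : ∀ (x : M) (v w : V x), g x v w = g x w v)
    (hgsmooth : ∀ Y Z : ContMDiffSection IB F (⊤ : ℕ∞) V,
      ContMDiff IB 𝓘(ℝ, ℝ) (⊤ : ℕ∞) (fun x => g x (Y x) (Z x)))
    -- nondegeneracy, at the level of sections
    (hgnondeg : ∀ W : ContMDiffSection IB F (⊤ : ℕ∞) V,
      (∀ Z : ContMDiffSection IB F (⊤ : ℕ∞) V, (fun x => g x (W x) (Z x)) = fun _ => (0 : ℝ)) →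
        W = 0)
    -- the anchor, a smooth bundle map to the tangent bundle
    (ρ : ∀ x, V x →ₗ[ℝ] TangentSpace IB x)
    (hρ : ContMDiff (IB.prod 𝓘(ℝ, F)) IB.tangent (⊤ : ℕ∞)
      (fun p : TotalSpace F V => TotalSpace.mk' EB p.proj (ρ p.proj p.snd)))
    -- the bilinear operation on sections
    (circ : ContMDiffSection IB F (⊤ : ℕ∞) V → ContMDiffSection IB F (⊤ : ℕ∞) V → ContMDiffSection IB F (⊤ : ℕ∞) V)
    (hbilin : ∀ (c : ℝ) (X X' Y Y' : ContMDiffSection IB F (⊤ : ℕ∞) V),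
      circ (X + X') Y = circ X Y + circ X' Y ∧ circ X (Y + Y') = circ X Y + circ X Y' ∧
        circ (c • X) Y = c • circ X Y ∧ circ X (c • Y) = c • circ X Y)
    -- `ρ(X)⟨Y,Z⟩ = ⟨X∘Y,Z⟩ + ⟨Y,X∘Z⟩`
    (hax1 : ∀ (X Y Z : ContMDiffSection IB F (⊤ : ℕ∞) V) (x : M),
      (mfderiv IB 𝓘(ℝ, ℝ) (fun y => g y (Y y) (Z y)) x (ρ x (X x)) : ℝ) =
        g x (circ X Y x) (Z x) + g x (Y x) (circ X Z x))
    -- `ρ(X)⟨Y,Z⟩ = ⟨X,Y∘Z⟩ + ⟨X,Z∘Y⟩`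
    (hax2 : ∀ (X Y Z : ContMDiffSection IB F (⊤ : ℕ∞) V) (x : M),
      (mfderiv IB 𝓘(ℝ, ℝ) (fun y => g y (Y y) (Z y)) x (ρ x (X x)) : ℝ) =
        g x (X x) (circ Y Z x) + g x (X x) (circ Z Y x))
    -- a smooth function `f` and sections `X, Y`; `fY` is the section `f • Y`
    (f : M → ℝ) (hf : ContMDiff IB 𝓘(ℝ, ℝ) (⊤ : ℕ∞) f)
    (X Y fY : ContMDiffSection IB F (⊤ : ℕ∞) V) (hfY : ∀ x, fY x = f x • Y x) :
    ∀ x : M, circ X fY x = f x • circ X Y x + (show ℝ from mfderiv IB 𝓘(ℝ, ℝ) f x (ρ x (X x))) • Y x := by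

  classical
  set D : M → ℝ := fun x => (mfderiv IB 𝓘(ℝ, ℝ) f x (ρ x (X x)) : ℝ) with hD_def
  have hD : ContMDiff IB 𝓘(ℝ, ℝ) (⊤ : ℕ∞) D := aux_D IB M F V ρ hρ f hf X
  set S1 : ContMDiffSection IB F (⊤ : ℕ∞) V :=
    ⟨fun x => f x • circ X Y x, aux_fsmul IB M F V f hf (circ X Y)⟩ with hS1_def
  set S2 : ContMDiffSection IB F (⊤ : ℕ∞) V :=
    ⟨fun x => D x • Y x, aux_fsmul IB M F V D hD Y⟩ with hS2_def
  have key : ∀ (Z : ContMDiffSection IB F (⊤ : ℕ∞) V) (x : M),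
      g x ((circ X fY - (S1 + S2)) x) (Z x) = 0 := by
    intro Z x
    set u : M → ℝ := fun y => g y (Y y) (Z y) with hu_def
    have hu : MDifferentiableAt IB 𝓘(ℝ, ℝ) u x :=
      ((hgsmooth Y Z).mdifferentiableAt (by simp))
    have hfd : MDifferentiableAt IB 𝓘(ℝ, ℝ) f x := hf.mdifferentiableAt (by simp)
    have hprod := hfd.hasMFDerivAt.mul hu.hasMFDerivAt
    have e1 : (fun y => g y (fY y) (Z y)) = f * u := by
      funext y
      simp only [hfY y, Pi.mul_apply, hu_def, map_smul, LinearMap.smul_apply, smul_eq_mul]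
    have e2 : (mfderiv IB 𝓘(ℝ, ℝ) (fun y => g y (fY y) (Z y)) x (ρ x (X x)) : ℝ) =
        f x * (show ℝ from mfderiv IB 𝓘(ℝ, ℝ) u x (ρ x (X x))) + u x * D x := by
      rw [e1, hprod.mfderiv]
      rfl
    have A1 := hax1 X fY Z x
    have A2 := hax1 X Y Z x
    rw [e2] at A1
    rw [A2] at A1
    have hfYx : g x (fY x) (circ X Z x) = f x * g x (Y x) (circ X Z x) := by
      rw [hfY x]; simp [smul_eq_mul]
    have hux : u x = g x (Y x) (Z x) := rfl
    simp only [ContMDiffSection.coe_sub, Pi.sub_apply, ContMDiffSection.coe_add, Pi.add_apply,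
      map_sub, map_add, LinearMap.sub_apply, LinearMap.add_apply]
    have hS1x : S1 x = f x • circ X Y x := rfl
    have hS2x : S2 x = D x • Y x := rfl
    rw [hS1x, hS2x]
    simp only [map_smul, LinearMap.smul_apply, smul_eq_mul]
    rw [hfYx] at A1
    have A1' : f x * (g x (circ X Y x) (Z x) + g x (Y x) (circ X Z x)) +
        g x (Y x) (Z x) * D x =
        g x (circ X fY x) (Z x) + f x * g x (Y x) (circ X Z x) := A1
    linear_combination -A1'
  have hW : circ X fY - (S1 + S2) = 0 :=
    hgnondeg _ (fun Z => funext fun x => key Z x)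
  have hEq : circ X fY = S1 + S2 := sub_eq_zero.mp hW
  intro x
  calc circ X fY x = (S1 + S2) x := by rw [hEq]
    _ = f x • circ X Y x + D x • Y x := rfl
end
end
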